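/- Let ⟨A, ∧, ∨, ¬, ∼̇, 0, 1⟩ be an algebra where ⟨A, ∧, ∨, 0, 1⟩ is a bounded distributive lattice satisfying (B1)–(B10). Define ∼x := (x ∨ ¬x) ∧ ∼̇x and ∇x := ¬¬x. Then ⟨A, ∧, ∨, ∼, ∇, 1⟩ is a 4-valued modal algebra, i.e., it satisfies: x ∧ (x ∨ y) = x; x ∧ (y ∨ z) = (z ∧ x) ∨ (y ∧ x); ∼∼x = x; ∼(x ∨ y) = ∼x ∧ ∼y; ∼x ∨ ∇x = 1; x ∧ ∼x = ∼x ∧ ∇x. -/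
import Mathlib


theorem stmt {A : Type*} [DistribLattice A] [BoundedOrder A]
    (n s : A → A)
    (B1 : ∀ x : A, x ⊓ n x = ⊥)
    (B2 : ∀ x : A, x ⊔ s x = ⊤)
    (B3 : ∀ x : A, n x ⊓ s (n x) = ⊥)
    (B4 : ∀ x : A, s x ⊔ n (s x) = ⊤)
    (B5 : ∀ x y : A, s (x ⊓ y) = s x ⊔ s y)
    (B6 : ∀ x y : A, n (x ⊔ y) = n x ⊓ n y)
    (B7 : ∀ x y : A, n (x ⊓ n y) = n x ⊔ n (n y))
    (B8 : ∀ x y : A, s (x ⊔ s y) = s x ⊓ s (s y))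
    (B9 : ∀ x y : A, (x ⊔ y) ⊓ s (x ⊔ y) ≤ x ⊔ n x)
    (B10 : ∀ x y : A, x ⊓ s x ⊓ y ⊓ s y ≤ s (x ⊔ y))
    (m : A → A) (hm : ∀ x : A, m x = (x ⊔ n x) ⊓ s x)
    (d : A → A) (hd : ∀ x : A, d x = n (n x)) :
    ∀ x y z : A, x ⊓ (x ⊔ y) = x ∧ x ⊓ (y ⊔ z) = (z ⊓ x) ⊔ (y ⊓ x) ∧ m (m x) = x ∧ m (x ⊔ y) = m x ⊓ m y ∧ m x ⊔ d x = ⊤ ∧ x ⊓ m x = m x ⊓ d x := by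
  -- antitonicity
  have sAnti : ∀ {x y : A}, x ≤ y → s y ≤ s x := by
    intro x y h
    have h5 : s (x ⊓ y) = s x ⊔ s y := B5 x y
    rw [inf_eq_left.mpr h] at h5
    exact le_sup_right.trans h5.ge
  have nAnti : ∀ {x y : A}, x ≤ y → n y ≤ n x := by
    intro x y h
    have h6 : n (x ⊔ y) = n x ⊓ n y := B6 x y
    rw [sup_eq_right.mpr h] at h6
    exact h6.le.trans inf_le_left
  have sB : s (⊥ : A) = ⊤ := by have := B2 (⊥ : A); rwa [bot_sup_eq] at this
  have L2n : ∀ x : A, n x ⊔ n (n x) = n ⊥ := fun x => by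
    have h := B7 x x; rw [B1 x] at h; exact h.symm
  have L2s : ∀ x : A, s x ⊓ s (s x) = s ⊤ := fun x => by
    have h := B8 x x; rw [B2 x] at h; exact h.symm
  have nnB : n (n (⊥ : A)) = ⊥ := by
    have h1 : n (n (⊥ : A)) ≤ n ⊥ := sup_eq_left.mp (L2n ⊥)
    have h2 := B1 (n (⊥ : A))
    exact (inf_eq_right.mpr h1).symm.trans h2
  have sTle : ∀ x : A, s ⊤ ≤ x ⊔ n x := fun x => by
    have h := B9 x ⊤
    rwa [sup_top_eq, top_inf_eq] at h
  have sT : s (⊤ : A) = ⊥ := by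
    have h1 : s (⊤ : A) ≤ n ⊥ := by
      have := sTle (n (⊥ : A)); rwa [nnB, sup_bot_eq] at this
    have h2 : s (⊤ : A) ≤ s (n (⊥ : A)) := sAnti le_top
    have h3 := B3 (⊥ : A)
    exact le_bot_iff.mp (h3 ▸ le_inf h1 h2)
  have nB : n (⊥ : A) = ⊤ := by
    have h := B4 (⊤ : A); rwa [sT, bot_sup_eq] at h
  have compN : ∀ x : A, n x ⊔ n (n x) = ⊤ := fun x => (L2n x).trans nB
  have compS : ∀ x : A, s x ⊓ s (s x) = ⊥ := fun x => (L2s x).trans sT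
  have uniq : ∀ a b c : A, a ⊓ b = ⊥ → a ⊔ b = ⊤ → a ⊓ c = ⊥ → a ⊔ c = ⊤ → b = c := by
    intro a b c h1 h2 h3 h4
    exact (IsCompl.of_eq h1 h2).right_unique (IsCompl.of_eq h3 h4)
  have nn_eq_sn : ∀ x : A, n (n x) = s (n x) := fun x =>
    uniq (n x) (n (n x)) (s (n x)) (B1 (n x)) (compN x) (B3 x) (B2 (n x))
  have ss_eq_ns : ∀ x : A, s (s x) = n (s x) := fun x =>
    uniq (s x) (s (s x)) (n (s x)) (compS x) (B2 (s x)) (B1 (s x)) (B4 x)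
  have ss_n : ∀ x : A, s (s (n x)) = n x := fun x =>
    uniq (s (n x)) (s (s (n x))) (n x) (compS (n x)) (B2 (s (n x)))
      (by rw [inf_comm]; exact B3 x) (by rw [sup_comm]; exact B2 (n x))
  have nn_s : ∀ x : A, n (n (s x)) = s x := fun x =>
    uniq (n (s x)) (n (n (s x))) (s x) (B1 (n (s x))) (compN (s x))
      (by rw [inf_comm]; exact B1 (s x)) (by rw [sup_comm]; exact B4 x)
  have s_nn : ∀ x : A, s (n (n x)) = n x := fun x => by rw [nn_eq_sn]; exact ss_n x
  have n_ss : ∀ x : A, n (s (s x)) = s x := fun x => by rw [ss_eq_ns]; exact nn_s x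
  have le_nn : ∀ x : A, x ≤ n (n x) := fun x => by
    have h : x = x ⊓ n (n x) := by
      conv_lhs => rw [← inf_top_eq x, ← compN x, inf_sup_left, B1, bot_sup_eq]
    exact h.le.trans inf_le_right
  have ss_le : ∀ x : A, s (s x) ≤ x := fun x => by
    have h : x = x ⊔ s (s x) := by
      conv_lhs => rw [← sup_bot_eq x, ← compS x, sup_inf_left, B2, top_inf_eq]
    exact le_sup_right.trans h.ge
  have n_le_s : ∀ x : A, n x ≤ s x := fun x => by
    have h1 : s x ⊔ s (n x) = ⊤ := by rw [← B5, B1, sB]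
    have h : n x = n x ⊓ s x := by
      conv_lhs => rw [← inf_top_eq (n x), ← h1, inf_sup_left, B3, sup_bot_eq]
    exact h.le.trans inf_le_right
  -- key inequality: s x ⊓ n y ≤ s (x ⊔ y)
  have sD : ∀ x y : A, s x ⊓ n y ≤ s (x ⊔ y) := fun x y => by
    have key : s (x ⊔ n (n y)) = s x ⊓ n y := by
      conv_lhs => rw [nn_eq_sn y]
      rw [B8, ss_n]
    have h := sAnti (sup_le_sup_left (le_nn y) x)
    rwa [key] at h
  have n_sim : ∀ x : A, n ((x ⊔ n x) ⊓ s x) = s (s x) := fun x => by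
    conv_lhs => rw [← n_ss x]
    rw [B7, B6, B1 (n x), nn_s (s x), bot_sup_eq]
  have sxnx : ∀ x : A, s (x ⊔ n x) = s x ⊓ s (n x) := fun x => by
    conv_lhs => rw [← s_nn x]
    rw [B8, s_nn]
  have s_sim : ∀ x : A, s ((x ⊔ n x) ⊓ s x) = n (n x) ⊔ s (s x) := fun x => by
    rw [B5, sxnx, sup_inf_right, B2, top_inf_eq, nn_eq_sn]
  have aux1 : ∀ x : A, (x ⊔ n x) ⊓ n (n x) = x := fun x => by
    rw [inf_sup_right, B1 (n x), sup_bot_eq, inf_eq_left]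
    exact le_nn x
  have simnn : ∀ x : A, ((x ⊔ n x) ⊓ s x) ⊓ n (n x) = x ⊓ s x := fun x => by
    rw [inf_right_comm, aux1]
  have simsim : ∀ x : A,
      (((x ⊔ n x) ⊓ s x) ⊔ n ((x ⊔ n x) ⊓ s x)) ⊓ s ((x ⊔ n x) ⊓ s x) = x := fun x => by
    rw [n_sim, s_sim, ← sup_inf_right, simnn, sup_inf_right, B2 (s x), inf_top_eq,
      sup_eq_left]
    exact ss_le x
  have simLe : ∀ x y : A, (x ⊔ y ⊔ n (x ⊔ y)) ⊓ s (x ⊔ y) ≤ (x ⊔ n x) ⊓ s x := fun x y => by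
    refine le_inf ?_ (inf_le_right.trans (sAnti le_sup_left))
    rw [inf_sup_right]
    refine sup_le (B9 x y) ?_
    exact inf_le_left.trans ((B6 x y).le.trans (inf_le_left.trans le_sup_right))
  have simGe : ∀ x y : A, ((x ⊔ n x) ⊓ s x) ⊓ ((y ⊔ n y) ⊓ s y) ≤
      (x ⊔ y ⊔ n (x ⊔ y)) ⊓ s (x ⊔ y) := fun x y => by
    have hL : ((x ⊔ n x) ⊓ s x) ⊓ ((y ⊔ n y) ⊓ s y)
        = ((x ⊔ n x) ⊓ (y ⊔ n y)) ⊓ (s x ⊓ s y) := inf_inf_inf_comm _ _ _ _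
    rw [hL]
    refine le_inf (inf_le_left.trans ?_) ?_
    · -- (x ⊔ n x) ⊓ (y ⊔ n y) ≤ x ⊔ y ⊔ n (x ⊔ y)
      rw [B6, inf_sup_right]
      refine sup_le (inf_le_left.trans (le_sup_of_le_left le_sup_left)) ?_
      rw [inf_sup_left]
      exact sup_le (inf_le_right.trans (le_sup_of_le_left le_sup_right)) le_sup_right
    · calc (x ⊔ n x) ⊓ (y ⊔ n y) ⊓ (s x ⊓ s y)
          = (x ⊓ (y ⊔ n y) ⊔ n x ⊓ (y ⊔ n y)) ⊓ (s x ⊓ s y) := by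
            rw [inf_sup_right x (n x) (y ⊔ n y)]
        _ = (x ⊓ (y ⊔ n y)) ⊓ (s x ⊓ s y) ⊔ (n x ⊓ (y ⊔ n y)) ⊓ (s x ⊓ s y) :=
            inf_sup_right _ _ _
        _ = (x ⊓ y ⊔ x ⊓ n y) ⊓ (s x ⊓ s y) ⊔ (n x ⊓ y ⊔ n x ⊓ n y) ⊓ (s x ⊓ s y) := by
            rw [inf_sup_left x y (n y), inf_sup_left (n x) y (n y)]
        _ = ((x ⊓ y) ⊓ (s x ⊓ s y) ⊔ (x ⊓ n y) ⊓ (s x ⊓ s y))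
            ⊔ ((n x ⊓ y) ⊓ (s x ⊓ s y) ⊔ (n x ⊓ n y) ⊓ (s x ⊓ s y)) := by
            rw [inf_sup_right (x ⊓ y) (x ⊓ n y) (s x ⊓ s y),
              inf_sup_right (n x ⊓ y) (n x ⊓ n y) (s x ⊓ s y)]
        _ ≤ s (x ⊔ y) := by
            refine sup_le (sup_le ?_ ?_) (sup_le ?_ ?_)
            · refine le_trans (le_of_eq ?_) (B10 x y)
              simp only [inf_assoc, inf_comm, inf_left_comm]
            · refine le_trans ?_ (sD x y)
              exact le_inf (inf_le_right.trans inf_le_left) (inf_le_left.trans inf_le_right)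
            · have h := sD y x
              rw [sup_comm y x] at h
              refine le_trans ?_ h
              exact le_inf (inf_le_right.trans inf_le_right) (inf_le_left.trans inf_le_left)
            · exact inf_le_left.trans ((B6 x y).symm.le.trans (n_le_s (x ⊔ y)))
  have G5 : ∀ x : A, ((x ⊔ n x) ⊓ s x) ⊔ n (n x) = ⊤ := fun x => by
    rw [sup_inf_right, sup_assoc, compN, sup_top_eq, top_inf_eq, nn_eq_sn, ← B5, B1, sB]
  have G6 : ∀ x : A, x ⊓ ((x ⊔ n x) ⊓ s x) = ((x ⊔ n x) ⊓ s x) ⊓ n (n x) := fun x => by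
    rw [simnn, ← inf_assoc, inf_sup_self]
  intro x y z
  simp only [hm, hd]
  refine ⟨inf_sup_self, ?_, simsim x, ?_, G5 x, G6 x⟩
  · rw [inf_sup_left, inf_comm x y, inf_comm x z, sup_comm (y ⊓ x) (z ⊓ x)]
  · refine le_antisymm (le_inf (simLe x y) ?_) (simGe x y)
    have h := simLe y x
    rwa [sup_comm y x] at h
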